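/- Language emptiness of a simple generalized Rabin automaton reduces to reachable-SCC analysis of the ⓪-free subautomaton: L(A) ≠ ∅ iff there exists a set of states D, all mutually reachable using only non-⓪ transitions, such that D is reachable from I in A (possibly using ⓪-transitions), and the non-⓪ transitions inside D carry together all colours ①, ..., ⓚ₋₁ on some cycle within D. -/

import Mathlib

/-- A (transition-based) simple generalized Rabin automaton with `k` colours
`⓪, ①, …, ⓚ₋₁` (represented as `Fin k`, with `⓪ = 0`) and acceptance condition
`Fin(⓪) ∧ Inf(①) ∧ … ∧ Inf(ⓚ₋₁)`. -/
structure SGRA (Q A : Type) (k : ℕ) where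
  δ : Set (Q × A × Q)
  I : Set Q
  colour : Q × A × Q → Set (Fin k)

variable {Q A : Type} {k : ℕ}

/-- `ρ` is a run of `M` on the infinite word `w`. -/
def SGRA.IsRun (M : SGRA Q A k) (w : ℕ → A) (ρ : ℕ → Q) : Prop :=
  ∀ i, (ρ i, w i, ρ (i + 1)) ∈ M.δ

/-- Transitions occurring infinitely often in the run `ρ` on `w`. -/
def SGRA.InfTrans (M : SGRA Q A k) (w : ℕ → A) (ρ : ℕ → Q) : Set (Q × A × Q) :=
  {τ | ∀ N, ∃ i ≥ N, (ρ i, w i, ρ (i + 1)) = τ}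

/-- A run is accepting iff the union of the colours of the transitions occurring
infinitely often is exactly `{①, …, ⓚ₋₁}` (all colours except `⓪`). -/
def SGRA.AccRun [NeZero k] (M : SGRA Q A k) (w : ℕ → A) (ρ : ℕ → Q) : Prop :=
  M.IsRun w ρ ∧ (⋃ τ ∈ M.InfTrans w ρ, M.colour τ) = {c : Fin k | c ≠ 0}

/-- The ω-language of the SGRA `M`. -/
def SGRA.Lang [NeZero k] (M : SGRA Q A k) : Set (ℕ → A) :=
  {w | ∃ ρ : ℕ → Q, ρ 0 ∈ M.I ∧ M.AccRun w ρ}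

/-- One-step successor relation. -/
def SGRA.Step (M : SGRA Q A k) (q r : Q) : Prop := ∃ a, (q, a, r) ∈ M.δ

/-- Reachability along transitions of `M`. -/
def SGRA.Reach (M : SGRA Q A k) : Q → Q → Prop := Relation.ReflTransGen M.Step

/-- Reachability using only non-`⓪` transitions. -/
def SGRA.NZReach [NeZero k] (M : SGRA Q A k) : Q → Q → Prop :=
  Relation.ReflTransGen (fun q r => ∃ a, (q, a, r) ∈ M.δ ∧ (0 : Fin k) ∉ M.colour (q, a, r))

/-- Extract a labelled finite path from a reflexive-transitive closure. -/
lemma exists_labelled_path {P : Q → A → Q → Prop} {q r : Q}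
    (h : Relation.ReflTransGen (fun x y => ∃ a, P x a y) q r) (a0 : A) :
    ∃ (m : ℕ) (π : ℕ → Q) (b : ℕ → A), π 0 = q ∧ π m = r ∧
      ∀ j < m, P (π j) (b j) (π (j + 1)) := by
  induction h with
  | refl => exact ⟨0, fun _ => q, fun _ => a0, rfl, rfl, fun j hj => absurd hj (Nat.not_lt_zero j)⟩
  | @tail r' r'' _ hstep ih =>
    obtain ⟨m, π, b, h0, hm, hP⟩ := ih
    obtain ⟨a', ha'⟩ := hstep
    refine ⟨m + 1, fun j => if j ≤ m then π j else r'', fun j => if j < m then b j else a',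
      ?_, ?_, ?_⟩
    · simp [h0]
    · simp
    · intro j hj
      rcases Nat.lt_or_ge j m with hjm | hjm
      · simpa [hjm.le, hjm, Nat.succ_le_of_lt hjm] using hP j hjm
      · have hjm' : j = m := by omega
        subst hjm'
        simpa [hm] using ha'

lemma reach_of_run {r : Q → Q → Prop} {ρ : ℕ → Q} {i : ℕ}
    (h : ∀ l, i ≤ l → r (ρ l) (ρ (l + 1))) :
    ∀ d, Relation.ReflTransGen r (ρ i) (ρ (i + d)) := by
  intro d
  induction d with
  | zero => exact Relation.ReflTransGen.refl
  | succ d ih => exact ih.tail (h (i + d) (Nat.le_add_right i d))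

/-- `L(A) ≠ ∅` iff there is a set of states `D`, all mutually reachable
using only non-`⓪` transitions, such that `D` is reachable from `I` in `A` (possibly
using `⓪`-transitions), and the non-`⓪` transitions inside `D` carry together all
colours `①, …, ⓚ₋₁` on some cycle within `D`. -/
theorem sgra_nonempty_iff_scc [Fintype Q] [Fintype A] [NeZero k] (M : SGRA Q A k) :
    M.Lang ≠ ∅ ↔
      ∃ D : Set Q,
        (∀ q ∈ D, ∀ r ∈ D, M.NZReach q r) ∧
        (∃ q ∈ D, ∃ q0 ∈ M.I, M.Reach q0 q) ∧
        (∃ (n : ℕ) (σ : ℕ → Q) (a : ℕ → A), 0 < n ∧ σ 0 = σ n ∧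
          (∀ j < n, σ j ∈ D ∧ (σ j, a j, σ (j + 1)) ∈ M.δ ∧
            (0 : Fin k) ∉ M.colour (σ j, a j, σ (j + 1))) ∧
          ∀ c : Fin k, c ≠ 0 → ∃ j < n, c ∈ M.colour (σ j, a j, σ (j + 1))) := by
  constructor
  · -- forward direction
    intro hne
    obtain ⟨w, hw⟩ := Set.nonempty_iff_ne_empty.mpr hne
    obtain ⟨ρ, hI, hrun, hcol⟩ := hw
    have hTnz : ∀ τ ∈ M.InfTrans w ρ, (0 : Fin k) ∉ M.colour τ := by
      intro τ hτ h0
      have h : (0 : Fin k) ∈ ⋃ τ ∈ M.InfTrans w ρ, M.colour τ := Set.mem_biUnion hτ h0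
      rw [hcol] at h
      exact h rfl
    have hEv1 : ∀ᶠ i in Filter.atTop, ρ i ∈ {q : Q | ∀ N, ∃ i ≥ N, ρ i = q} := by
      have key : ∀ q : Q, ∀ᶠ i in Filter.atTop,
          ρ i = q → q ∈ {q : Q | ∀ N, ∃ i ≥ N, ρ i = q} := by
        intro q
        by_cases hq : q ∈ {q : Q | ∀ N, ∃ i ≥ N, ρ i = q}
        · exact Filter.Eventually.of_forall fun i _ => hq
        · simp only [Set.mem_setOf_eq] at hq
          push_neg at hq
          obtain ⟨N, hN⟩ := hq
          filter_upwards [Filter.eventually_ge_atTop N] with i hi h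
          exact absurd h (hN i hi)
      filter_upwards [Filter.eventually_all.2 key] with i h
      exact h (ρ i) rfl
    have hEv2 : ∀ᶠ i in Filter.atTop, (ρ i, w i, ρ (i + 1)) ∈ M.InfTrans w ρ := by
      have key : ∀ τ : Q × A × Q, ∀ᶠ i in Filter.atTop,
          (ρ i, w i, ρ (i + 1)) = τ → τ ∈ M.InfTrans w ρ := by
        intro τ
        by_cases hτ : τ ∈ M.InfTrans w ρ
        · exact Filter.Eventually.of_forall fun i _ => hτ
        · simp only [SGRA.InfTrans, Set.mem_setOf_eq] at hτ
          push_neg at hτ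
          obtain ⟨N, hN⟩ := hτ
          filter_upwards [Filter.eventually_ge_atTop N] with i hi h
          exact absurd h (hN i hi)
      filter_upwards [Filter.eventually_all.2 key] with i h
      exact h _ rfl
    obtain ⟨N', hN'⟩ := Filter.eventually_atTop.1 (hEv1.and hEv2)
    refine ⟨{q : Q | ∀ N, ∃ i ≥ N, ρ i = q}, ?_, ?_, ?_⟩
    · -- mutual NZ-reachability
      intro q hq r hr
      obtain ⟨i, hi, hqi⟩ := hq N'
      obtain ⟨j, hj, hrj⟩ := hr i
      have hrr := reach_of_run
        (r := fun q r => ∃ a, (q, a, r) ∈ M.δ ∧ (0 : Fin k) ∉ M.colour (q, a, r))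
        (ρ := ρ) (i := i)
        (fun l hl => ⟨w l, hrun l, hTnz _ (hN' l (le_trans hi hl)).2⟩) (j - i)
      rw [Nat.add_sub_cancel' hj] at hrr
      rw [← hqi, ← hrj]
      exact hrr
    · -- reachability from the initial states
      refine ⟨ρ N', (hN' N' le_rfl).1, ρ 0, hI, ?_⟩
      have hrr := reach_of_run (r := M.Step) (ρ := ρ) (i := 0)
        (fun l _ => ⟨w l, hrun l⟩) N'
      simpa [SGRA.Reach] using hrr
    · -- the cycle carrying all colours
      have hpick : ∀ c : Fin k, ∃ i, N' ≤ i ∧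
          (c ≠ 0 → c ∈ M.colour (ρ i, w i, ρ (i + 1))) := by
        intro c
        by_cases hc : c = 0
        · exact ⟨N', le_rfl, fun h => absurd hc h⟩
        · have hcmem : c ∈ ⋃ τ ∈ M.InfTrans w ρ, M.colour τ := by rw [hcol]; exact hc
          obtain ⟨τ, hτT, hcτ⟩ := Set.mem_iUnion₂.1 hcmem
          obtain ⟨i, hi, hti⟩ := hτT N'
          exact ⟨i, hi, fun _ => by rw [hti]; exact hcτ⟩
      choose f hf1 hf2 using hpick
      obtain ⟨e, he, hρe⟩ := (hN' N' le_rfl).1 (Finset.univ.sup f + N' + 1)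
      have hfle : ∀ c : Fin k, f c < e := by
        intro c
        have h1 : f c ≤ Finset.univ.sup f := Finset.le_sup (Finset.mem_univ c)
        omega
      have hN'e : N' < e := by omega
      refine ⟨e - N', fun j => ρ (N' + j), fun j => w (N' + j), by omega, ?_, ?_, ?_⟩
      · show ρ (N' + 0) = ρ (N' + (e - N'))
        rw [Nat.add_zero, Nat.add_sub_cancel' hN'e.le, hρe]
      · intro j hj
        exact ⟨(hN' (N' + j) (Nat.le_add_right _ _)).1, hrun (N' + j),
          hTnz _ (hN' (N' + j) (Nat.le_add_right _ _)).2⟩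
      · intro c hc
        have hA : N' ≤ f c := hf1 c
        have hB : f c < e := hfle c
        refine ⟨f c - N', by omega, ?_⟩
        show c ∈ M.colour (ρ (N' + (f c - N')), w (N' + (f c - N')), ρ (N' + (f c - N' + 1)))
        rw [show N' + (f c - N' + 1) = f c + 1 from by omega,
          show N' + (f c - N') = f c from by omega]
        exact hf2 c hc
  · -- backward direction
    rintro ⟨D, hmut, ⟨q, hqD, q0, hq0I, hreach⟩, n, σ, a, hn, hcyc, hstep, hcolall⟩
    have hσ0D : σ 0 ∈ D := (hstep 0 hn).1
    have hreach0 : Relation.ReflTransGen (fun x y => ∃ a', (x, a', y) ∈ M.δ) q0 (σ 0) := by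
      refine Relation.ReflTransGen.trans hreach ?_
      exact Relation.ReflTransGen.mono
        (r := fun q r => ∃ a, (q, a, r) ∈ M.δ ∧ (0 : Fin k) ∉ M.colour (q, a, r))
        (p := fun x y => ∃ a', (x, a', y) ∈ M.δ) (fun x y hxy => by
        obtain ⟨a', h, _⟩ := hxy; exact ⟨a', h⟩) q (σ 0) (hmut q hqD (σ 0) hσ0D)
    obtain ⟨m, π, b, hπ0, hπm, hπδ⟩ :=
      exists_labelled_path (P := fun x a' y => (x, a', y) ∈ M.δ) hreach0 (a 0)
    set ρ : ℕ → Q := fun i => if i < m then π i else σ ((i - m) % n) with hρdef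
    set w : ℕ → A := fun i => if i < m then b i else a ((i - m) % n) with hwdef
    have hρ_lt : ∀ i, i < m → ρ i = π i := fun i hi => if_pos hi
    have hρ_ge : ∀ i, m ≤ i → ρ i = σ ((i - m) % n) := fun i hi =>
      if_neg (Nat.not_lt.2 hi)
    have hw_lt : ∀ i, i < m → w i = b i := fun i hi => if_pos hi
    have hw_ge : ∀ i, m ≤ i → w i = a ((i - m) % n) := fun i hi =>
      if_neg (Nat.not_lt.2 hi)
    have hσmod : ∀ j : ℕ, σ ((j + 1) % n) = σ (j % n + 1) := by
      intro j
      have hlt : j % n < n := Nat.mod_lt j hn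
      rcases Nat.lt_or_ge (j % n + 1) n with h | h
      · rw [← Nat.mod_add_mod, Nat.mod_eq_of_lt h]
      · have h1 : j % n + 1 = n := by omega
        rw [← Nat.mod_add_mod, h1, Nat.mod_self]
        exact hcyc
    have hπle : ∀ i, i ≤ m → ρ i = π i := by
      intro i hi
      rcases Nat.lt_or_ge i m with h | h
      · exact hρ_lt i h
      · have him : i = m := by omega
        subst him
        rw [hρ_ge i le_rfl, Nat.sub_self, Nat.zero_mod, ← hπm]
    have hrunM : M.IsRun w ρ := by
      intro i
      rcases Nat.lt_or_ge i m with hi | hi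
      · rw [hρ_lt i hi, hw_lt i hi, hπle (i + 1) hi]
        exact hπδ i hi
      · rw [hρ_ge i hi, hw_ge i hi, hρ_ge (i + 1) (by omega),
          show i + 1 - m = (i - m) + 1 from by omega, hσmod]
        exact (hstep _ (Nat.mod_lt _ hn)).2.1
    have hρ0 : ρ 0 = q0 := by
      rcases Nat.eq_zero_or_pos m with hm | hm
      · rw [hρ_ge 0 (by omega), hm, Nat.sub_self, Nat.zero_mod, ← hπm]
        · rw [hm]
          exact hπ0
      · rw [hρ_lt 0 hm, hπ0]
    have hocc : ∀ j, j < n → (σ j, a j, σ (j + 1)) ∈ M.InfTrans w ρ := by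
      intro j hj N
      have him : m ≤ m + j + N * n := by omega
      have h1 : m + j + N * n - m = j + N * n := by omega
      have h2 : (j + N * n) % n = j := by
        rw [Nat.add_mul_mod_self_right, Nat.mod_eq_of_lt hj]
      refine ⟨m + j + N * n, ?_, ?_⟩
      · have h3 := Nat.le_mul_of_pos_right N hn
        omega
      · rw [hρ_ge _ him, hw_ge _ him, hρ_ge _ (by omega), h1, h2,
          show m + j + N * n + 1 - m = (j + N * n) + 1 from by omega, hσmod, h2]
    have hincl : ∀ τ ∈ M.InfTrans w ρ, ∃ j, j < n ∧ τ = (σ j, a j, σ (j + 1)) := by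
      intro τ hτ
      obtain ⟨i, hi, hti⟩ := hτ m
      refine ⟨(i - m) % n, Nat.mod_lt _ hn, ?_⟩
      rw [← hti, hρ_ge i hi, hw_ge i hi, hρ_ge (i + 1) (by omega),
        show i + 1 - m = (i - m) + 1 from by omega, hσmod]
    have hcolEq : (⋃ τ ∈ M.InfTrans w ρ, M.colour τ) = {c : Fin k | c ≠ 0} := by
      apply Set.Subset.antisymm
      · intro c hc
        obtain ⟨τ, hτ, hcτ⟩ := Set.mem_iUnion₂.1 hc
        obtain ⟨j, hj, rfl⟩ := hincl τ hτ
        show c ≠ 0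
        intro h0
        exact (hstep j hj).2.2 (h0 ▸ hcτ)
      · intro c hc
        obtain ⟨j, hj, hcj⟩ := hcolall c hc
        exact Set.mem_biUnion (hocc j hj) hcj
    exact Set.nonempty_iff_ne_empty.1 ⟨w, ρ, by rw [hρ0]; exact hq0I, hrunM, hcolEq⟩
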